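/- Let {(A_j, H_j, D_j)} be a countable inductive system of spectral triples with inductive realization (A, H, D). For every j, every self-adjoint a = a* ∈ A_j^∞, every k ≥ j, and every x ∈ 𝒟: P_k x ∈ 𝒟, π(φ_j(a))x ∈ 𝒟, and the commutator [D, π(φ_j(a))] commutes with P_k, i.e. D(π(φ_j(a))(P_kx)) − π(φ_j(a))(D(P_kx)) = P_k( D(π(φ_j(a))x) − π(φ_j(a))(Dx) ). -/

import Mathlib

/-- `T` is a bounded operator that preserves the domain of `Dm` and has bounded
commutator with `Dm` (i.e. `T` comes from an element of the smooth subalgebra). -/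
def BddCommutator {K : Type*} [NormedAddCommGroup K] [InnerProductSpace ℂ K]
    (Dm : K →ₗ.[ℂ] K) (T : K →L[ℂ] K) : Prop :=
  ∃ C : ℝ, ∀ ξ : Dm.domain, ∃ h : T ξ ∈ Dm.domain,
    ‖Dm ⟨T ξ, h⟩ - T (Dm ξ)‖ ≤ C * ‖ξ‖

local notation "⟪" x ", " y "⟫" => @inner ℂ _ _ x y

section AuxSelfAdjoint

variable {K : Type*} [NormedAddCommGroup K] [InnerProductSpace ℂ K] [CompleteSpace K]
variable {L : Type*} [NormedAddCommGroup L] [InnerProductSpace ℂ L] [CompleteSpace L]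

lemma pmap_symm {Dm : K →ₗ.[ℂ] K} (hsa : IsSelfAdjoint Dm) (ξ ζ : Dm.domain) :
    ⟪Dm ξ, (ζ : K)⟫ = ⟪(ξ : K), Dm ζ⟫ := by
  have hd : Dense (Dm.domain : Set K) := hsa.dense_domain
  have h := LinearPMap.adjoint_isFormalAdjoint hd
  rw [LinearPMap.isSelfAdjoint_def] at hsa
  rw [hsa] at h
  exact h ξ ζ

lemma pmap_closed {Dm : K →ₗ.[ℂ] K} (hsa : IsSelfAdjoint Dm) (u : ℕ → Dm.domain)
    {η ψ : K} (hη : Filter.Tendsto (fun n => ((u n : K))) Filter.atTop (nhds η))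
    (hψ : Filter.Tendsto (fun n => Dm (u n)) Filter.atTop (nhds ψ)) :
    ∃ h : η ∈ Dm.domain, Dm ⟨η, h⟩ = ψ := by
  have hd : Dense (Dm.domain : Set K) := hsa.dense_domain
  have key : ∀ x : Dm.domain, ⟪ψ, (x : K)⟫ = ⟪η, Dm x⟫ := by
    intro x
    have h1 : Filter.Tendsto (fun n => ⟪Dm (u n), (x : K)⟫) Filter.atTop (nhds ⟪ψ, (x : K)⟫) :=
      hψ.inner tendsto_const_nhds
    have h2 : Filter.Tendsto (fun n => ⟪(u n : K), Dm x⟫) Filter.atTop (nhds ⟪η, Dm x⟫) :=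
      hη.inner tendsto_const_nhds
    have h3 : (fun n => ⟪Dm (u n), (x : K)⟫) = fun n => ⟪(u n : K), Dm x⟫ :=
      funext fun n => pmap_symm hsa (u n) x
    rw [h3] at h1
    exact tendsto_nhds_unique h1 h2
  have hmem : η ∈ Dm.adjoint.domain :=
    LinearPMap.mem_adjoint_domain_of_exists η ⟨ψ, key⟩
  have hle : Dm.adjoint ≤ Dm := le_of_eq hsa
  refine ⟨hle.1 hmem, ?_⟩
  have h2 : Dm.adjoint ⟨η, hmem⟩ = ψ := LinearPMap.adjoint_apply_eq hd _ key
  rw [← h2]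
  exact (hle.2 rfl).symm

lemma pmap_normid {Dm : K →ₗ.[ℂ] K} (hsa : IsSelfAdjoint Dm) {c : ℂ} (hre : c.re = 0)
    (ξ : Dm.domain) :
    ‖Dm ξ + c • (ξ : K)‖ ^ 2 = ‖Dm ξ‖ ^ 2 + ‖c‖ ^ 2 * ‖(ξ : K)‖ ^ 2 := by
  have hreal : (starRingEnd ℂ) ⟪Dm ξ, (ξ : K)⟫ = ⟪Dm ξ, (ξ : K)⟫ := by
    rw [inner_conj_symm]
    exact (pmap_symm hsa ξ ξ).symm
  have him : (⟪Dm ξ, (ξ : K)⟫).im = 0 := by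
    have := congrArg Complex.im hreal
    simpa [Complex.conj_im] using by linarith [congrArg Complex.im hreal,
      (Complex.conj_im ⟪Dm ξ, (ξ : K)⟫)]
  have hinner : (RCLike.re : ℂ →+ ℝ) ⟪Dm ξ, c • (ξ : K)⟫ = 0 := by
    rw [inner_smul_right]
    simp [Complex.mul_re, hre, him]
  rw [@norm_add_sq ℂ, hinner, norm_smul]
  ring

lemma pmap_lower {Dm : K →ₗ.[ℂ] K} (hsa : IsSelfAdjoint Dm) {c : ℂ} (hre : c.re = 0)
    (ξ : Dm.domain) :
    ‖Dm ξ‖ ≤ ‖Dm ξ + c • (ξ : K)‖ ∧ ‖c‖ * ‖(ξ : K)‖ ≤ ‖Dm ξ + c • (ξ : K)‖ := by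
  have h := pmap_normid hsa hre ξ
  constructor
  · nlinarith [norm_nonneg (Dm ξ + c • (ξ : K)), norm_nonneg (Dm ξ),
      sq_nonneg (‖c‖ * ‖(ξ : K)‖), norm_nonneg (ξ : K), norm_nonneg c,
      mul_nonneg (norm_nonneg c) (norm_nonneg (ξ : K))]
  · nlinarith [norm_nonneg (Dm ξ + c • (ξ : K)), norm_nonneg (Dm ξ),
      mul_nonneg (norm_nonneg c) (norm_nonneg (ξ : K))]

lemma pmap_surj {Dm : K →ₗ.[ℂ] K} (hsa : IsSelfAdjoint Dm) {c : ℂ} (hre : c.re = 0)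
    (hc : c ≠ 0) (μ : K) : ∃ ξ : Dm.domain, Dm ξ + c • (ξ : K) = μ := by
  have hd : Dense (Dm.domain : Set K) := hsa.dense_domain
  have hc' : (0 : ℝ) < ‖c‖ := norm_pos_iff.mpr hc
  set φ : Dm.domain →ₗ[ℂ] K := Dm.toFun + c • Dm.domain.subtype with hφ
  have hφ_apply : ∀ ξ : Dm.domain, φ ξ = Dm ξ + c • (ξ : K) := fun ξ => rfl
  set S : Submodule ℂ K := LinearMap.range φ with hS
  have hclosed : IsClosed (S : Set K) := by
    rw [← isSeqClosed_iff_isClosed]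
    intro x y hx hxy
    choose u hu using fun n => (LinearMap.mem_range).mp (hx n)
    have hcx : CauchySeq x := hxy.cauchySeq
    have hval : ∀ n m : ℕ, Dm (u n - u m) + c • ((u n - u m : Dm.domain) : K) = x n - x m := by
      intro n m
      rw [← hu n, ← hu m, ← _root_.map_sub φ (u n) (u m), hφ_apply]
    have hbound1 : ∀ n m : ℕ, ‖(u n : K) - (u m : K)‖ * ‖c‖ ≤ ‖x n - x m‖ := by
      intro n m
      have h := (pmap_lower hsa hre (u n - u m)).2
      rw [hval n m] at h
      calc ‖(u n : K) - (u m : K)‖ * ‖c‖ = ‖c‖ * ‖((u n - u m : Dm.domain) : K)‖ := by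
            rw [mul_comm]; norm_num
        _ ≤ _ := h
    have hbound2 : ∀ n m : ℕ, ‖Dm (u n) - Dm (u m)‖ ≤ ‖x n - x m‖ := by
      intro n m
      have h := (pmap_lower hsa hre (u n - u m)).1
      rw [hval n m] at h
      simpa [LinearPMap.map_sub] using h
    have hcu : CauchySeq (fun n => (u n : K)) := by
      rw [Metric.cauchySeq_iff] at hcx ⊢
      intro ε hε
      obtain ⟨N, hN⟩ := hcx (ε * ‖c‖) (mul_pos hε hc')
      refine ⟨N, fun m hm n hn => ?_⟩
      have h1 := hbound1 m n
      have h2 := hN m hm n hn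
      rw [dist_eq_norm] at h2 ⊢
      have : ‖(u m : K) - (u n : K)‖ * ‖c‖ < ε * ‖c‖ := lt_of_le_of_lt h1 h2
      exact (mul_lt_mul_iff_of_pos_right hc').mp this
    have hcDu : CauchySeq (fun n => Dm (u n)) := by
      rw [Metric.cauchySeq_iff] at hcx ⊢
      intro ε hε
      obtain ⟨N, hN⟩ := hcx ε hε
      refine ⟨N, fun m hm n hn => ?_⟩
      have h2 := hN m hm n hn
      rw [dist_eq_norm] at h2 ⊢
      exact lt_of_le_of_lt (hbound2 m n) h2
    obtain ⟨η, hη⟩ := cauchySeq_tendsto_of_complete hcu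
    obtain ⟨ψ, hψ⟩ := cauchySeq_tendsto_of_complete hcDu
    obtain ⟨hmem, hval'⟩ := pmap_closed hsa u hη hψ
    have hlim : Filter.Tendsto x Filter.atTop (nhds (ψ + c • η)) := by
      have hxe : x = fun n => Dm (u n) + c • ((u n : K)) := by
        funext n; rw [← hu n, hφ_apply]
      rw [hxe]
      exact hψ.add (hη.const_smul c)
    have hyψ : y = ψ + c • η := tendsto_nhds_unique hxy hlim
    refine ⟨⟨η, hmem⟩, ?_⟩
    rw [hφ_apply, hval', hyψ]
  have hdense : Sᗮ = ⊥ := by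
    rw [Submodule.eq_bot_iff]
    intro y hy
    rw [Submodule.mem_orthogonal] at hy
    have hy' : ∀ ξ : Dm.domain, ⟪Dm ξ + c • (ξ : K), y⟫ = 0 := fun ξ =>
      hy _ (LinearMap.mem_range.mpr ⟨ξ, rfl⟩)
    set w : K := (-(starRingEnd ℂ) c) • y with hw
    have key : ∀ ξ : Dm.domain, ⟪w, (ξ : K)⟫ = ⟪y, Dm ξ⟫ := by
      intro ξ
      have h1 : ⟪Dm ξ, y⟫ = -((starRingEnd ℂ) c) * ⟪(ξ : K), y⟫ := by
        have h0 := hy' ξ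
        rw [inner_add_left, inner_smul_left] at h0
        linear_combination h0
      have h2 : ⟪y, Dm ξ⟫ = (starRingEnd ℂ) ⟪Dm ξ, y⟫ := (inner_conj_symm _ _).symm
      rw [h2, h1, hw, inner_smul_left]
      simp only [_root_.map_mul, _root_.map_neg, Complex.conj_conj, inner_conj_symm]
    have hmem : y ∈ Dm.adjoint.domain :=
      LinearPMap.mem_adjoint_domain_of_exists y ⟨w, key⟩
    have hle : Dm.adjoint ≤ Dm := le_of_eq hsa
    have hmem' : y ∈ Dm.domain := hle.1 hmem
    have hval : Dm ⟨y, hmem'⟩ = w := by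
      have h2 : Dm.adjoint ⟨y, hmem⟩ = w := LinearPMap.adjoint_apply_eq hd _ key
      rw [← h2]; exact (hle.2 rfl).symm
    have hsym := pmap_symm hsa ⟨y, hmem'⟩ ⟨y, hmem'⟩
    rw [hval, hw, inner_smul_left, inner_smul_right, _root_.map_neg,
      Complex.conj_conj] at hsym
    have him : c.im ≠ 0 := fun h => hc (Complex.ext hre h)
    have hcc : (starRingEnd ℂ) c - c ≠ 0 := by
      intro h
      have h' := congrArg Complex.im h
      simp [Complex.conj_im] at h'
      exact him (by linarith)
    have hsym' : -c * ⟪y, y⟫ = -(starRingEnd ℂ) c * ⟪y, y⟫ := hsym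
    have hzero : ((starRingEnd ℂ) c - c) * ⟪y, y⟫ = 0 := by linear_combination hsym'
    rcases mul_eq_zero.mp hzero with h | h
    · exact absurd h hcc
    · exact inner_self_eq_zero.mp h
  have hStop : S = ⊤ := by
    have h1 : S.topologicalClosure ≤ S := Submodule.topologicalClosure_minimal S le_rfl hclosed
    have h2 : Sᗮᗮ = S.topologicalClosure := Submodule.orthogonal_orthogonal_eq_closure S
    rw [hdense, Submodule.bot_orthogonal_eq_top] at h2
    exact le_antisymm le_top (h2 ▸ h1)
  have hμ : μ ∈ S := hStop ▸ Submodule.mem_top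
  obtain ⟨ξ, hξ⟩ := LinearMap.mem_range.mp hμ
  exact ⟨ξ, by rw [← hφ_apply]; exact hξ⟩

lemma pmap_inj {Dm : K →ₗ.[ℂ] K} (hsa : IsSelfAdjoint Dm) {c : ℂ} (hre : c.re = 0)
    (hc : c ≠ 0) {ξ ζ : Dm.domain}
    (h : Dm ξ + c • (ξ : K) = Dm ζ + c • (ζ : K)) : ξ = ζ := by
  have h2 := (pmap_lower hsa hre (ξ - ζ)).2
  have hval : Dm (ξ - ζ) + c • ((ξ - ζ : Dm.domain) : K) = 0 := by
    simp only [LinearPMap.map_sub, Submodule.coe_sub, smul_sub]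
    rw [show (Dm ξ - Dm ζ) + (c • (ξ:K) - c • (ζ:K)) =
      (Dm ξ + c • (ξ:K)) - (Dm ζ + c • (ζ:K)) by abel, h, sub_self]
  rw [hval, norm_zero] at h2
  have hc' : (0:ℝ) < ‖c‖ := norm_pos_iff.mpr hc
  have hnz : ‖((ξ - ζ : Dm.domain) : K)‖ = 0 := by
    nlinarith [norm_nonneg ((ξ - ζ : Dm.domain) : K)]
  have h0 : ((ξ - ζ : Dm.domain) : K) = 0 := norm_eq_zero.mp hnz
  have hcoe : (ξ : K) = (ζ : K) := by
    have h0' := h0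
    rw [Submodule.coe_sub, sub_eq_zero] at h0'
    exact h0'
  exact Subtype.ext hcoe

/-- The reduction lemma: the range of `U` reduces `Dm`. -/
lemma pmap_reduce {Dm : K →ₗ.[ℂ] K} {Dk : L →ₗ.[ℂ] L} (hm : IsSelfAdjoint Dm)
    (hk : IsSelfAdjoint Dk) (U : L →ₗᵢ[ℂ] K)
    (hU : ∀ ζ : Dk.domain, ∃ h : U ζ ∈ Dm.domain, Dm ⟨U ζ, h⟩ = U (Dk ζ))
    (η : Dm.domain) :
    ∃ η₁ η₂ : Dm.domain, (η₁ : K) ∈ LinearMap.range U.toLinearMap ∧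
      (η₂ : K) ∈ (LinearMap.range U.toLinearMap)ᗮ ∧ η = η₁ + η₂ ∧
      Dm η₁ ∈ LinearMap.range U.toLinearMap ∧ Dm η₂ ∈ (LinearMap.range U.toLinearMap)ᗮ := by
  set V : Submodule ℂ K := LinearMap.range U.toLinearMap with hV
  have hVset : (V : Set K) = Set.range U := by
    ext z; simp [hV, LinearMap.mem_range, Set.mem_range]
  have hVclosed : IsClosed (V : Set K) := by
    rw [hVset]; exact U.isometry.isClosedEmbedding.isClosed_range
  haveI : CompleteSpace V := hVclosed.completeSpace_coe
  have hIre : (Complex.I).re = 0 := Complex.I_re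
  have hIne : (Complex.I) ≠ 0 := Complex.I_ne_zero
  have hIre' : (-Complex.I).re = 0 := by simp
  have hIne' : (-Complex.I) ≠ 0 := neg_ne_zero.mpr Complex.I_ne_zero
  have hsolV : ∀ (c : ℂ), c.re = 0 → c ≠ 0 → ∀ v ∈ V, ∃ θ : Dm.domain,
      (θ : K) ∈ V ∧ Dm θ ∈ V ∧ Dm θ + c • (θ : K) = v := by
    intro c hre hc v hv
    obtain ⟨ζ, hζ⟩ := LinearMap.mem_range.mp hv
    obtain ⟨σ, hσ⟩ := pmap_surj hk hre hc ζ
    obtain ⟨hmem, hval⟩ := hU σ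
    refine ⟨⟨U σ, hmem⟩, LinearMap.mem_range.mpr ⟨σ, rfl⟩,
      by rw [hval]; exact LinearMap.mem_range.mpr ⟨Dk σ, rfl⟩, ?_⟩
    rw [hval]
    calc U (Dk σ) + c • (U σ : K) = U (Dk σ + c • (σ : L)) := by
          rw [U.map_add, U.map_smul]
      _ = U ζ := by rw [hσ]
      _ = v := by rw [← hζ]; rfl
  set μ : K := Dm η + Complex.I • (η : K) with hμdef
  obtain ⟨μ₁, hμ₁, μ₂, hμ₂, hμsum⟩ := V.exists_add_mem_mem_orthogonal μ
  obtain ⟨θ₁, hθ₁V, hDθ₁V, hθ₁val⟩ := hsolV Complex.I hIre hIne μ₁ hμ₁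
  obtain ⟨θ₂, hθ₂val⟩ := pmap_surj hm hIre hIne μ₂
  have hθ₂perp : (θ₂ : K) ∈ Vᗮ := by
    rw [Submodule.mem_orthogonal]
    intro v hv
    obtain ⟨θv, hθvV, _, hθvval⟩ := hsolV (-Complex.I) hIre' hIne' v hv
    have hcalc : ⟪v, (θ₂ : K)⟫ = ⟪(θv : K), μ₂⟫ := by
      rw [← hθvval, ← hθ₂val]
      rw [inner_add_left, inner_smul_left, inner_add_right, inner_smul_right,
        pmap_symm hm θv θ₂]
      simp [Complex.conj_neg_I]
    rw [hcalc]
    exact (Submodule.mem_orthogonal V μ₂).mp hμ₂ _ hθvV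
  have hDθ₂perp : Dm θ₂ ∈ Vᗮ := by
    have heq : Dm θ₂ = μ₂ - Complex.I • (θ₂ : K) := by rw [← hθ₂val]; abel
    rw [heq]
    exact Submodule.sub_mem _ hμ₂ (Submodule.smul_mem _ _ hθ₂perp)
  have hsum : η = θ₁ + θ₂ := by
    apply pmap_inj hm hIre hIne
    rw [LinearPMap.map_add, Submodule.coe_add, smul_add]
    rw [show Dm θ₁ + Dm θ₂ + (Complex.I • (θ₁:K) + Complex.I • (θ₂:K)) =
      (Dm θ₁ + Complex.I • (θ₁:K)) + (Dm θ₂ + Complex.I • (θ₂:K)) by abel,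
      hθ₁val, hθ₂val, ← hμsum]
  exact ⟨θ₁, θ₂, hθ₁V, hθ₂perp, hsum, hDθ₁V, hDθ₂perp⟩

end AuxSelfAdjoint

/-- For selfadjoint `a ∈ A_j^∞` and `k ≥ j`, the projection `P_k`
preserves `𝒟`, `π(φ_j(a))` preserves `𝒟`, and the commutator `[D, π(φ_j(a))]` commutes
with `P_k` on `𝒟`. -/
theorem stmt11
    (H : ℕ → Type*) [∀ j, NormedAddCommGroup (H j)] [∀ j, InnerProductSpace ℂ (H j)]
    [∀ j, CompleteSpace (H j)]
    (Hlim : Type*) [NormedAddCommGroup Hlim] [InnerProductSpace ℂ Hlim] [CompleteSpace Hlim]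
    (I : ∀ j k : ℕ, j ≤ k → H j →ₗᵢ[ℂ] H k) (J : ∀ j : ℕ, H j →ₗᵢ[ℂ] Hlim)
    (hI : ∀ (j k l : ℕ) (hjk : j ≤ k) (hkl : k ≤ l) (ξ : H j),
      I k l hkl (I j k hjk ξ) = I j l (hjk.trans hkl) ξ)
    (hJ : ∀ (j k : ℕ) (hjk : j ≤ k) (ξ : H j), J k (I j k hjk ξ) = J j ξ)
    (hdense : Dense (⋃ j, Set.range (J j)))
    (D : ∀ j, H j →ₗ.[ℂ] H j)
    (hDdense : ∀ j, Dense ((D j).domain : Set (H j)))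
    (hDsa : ∀ j, IsSelfAdjoint (D j))
    (hDcompat : ∀ (j k : ℕ) (hjk : j ≤ k) (ξ : (D j).domain),
      ∃ h : I j k hjk ξ ∈ (D k).domain, (D k) ⟨I j k hjk ξ, h⟩ = I j k hjk ((D j) ξ))
    (D₀ : Hlim →ₗ.[ℂ] Hlim)
    (hdom : (D₀.domain : Set Hlim) = ⋃ j, (J j) '' ((D j).domain : Set (H j)))
    (hact : ∀ (j : ℕ) (ξ : (D j).domain) (h : J j ξ ∈ D₀.domain), D₀ ⟨J j ξ, h⟩ = J j ((D j) ξ))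
    (A : ℕ → Type*) [∀ j, NormedRing (A j)] [∀ j, StarRing (A j)] [∀ j, CStarRing (A j)]
    [∀ j, NormedAlgebra ℂ (A j)] [∀ j, StarModule ℂ (A j)] [∀ j, CompleteSpace (A j)]
    (φ : ∀ j k : ℕ, j ≤ k → A j →⋆ₐ[ℂ] A k)
    (hφinj : ∀ (j k : ℕ) (hjk : j ≤ k), Function.Injective (φ j k hjk))
    (hφ : ∀ (j k l : ℕ) (hjk : j ≤ k) (hkl : k ≤ l) (a : A j),
      φ k l hkl (φ j k hjk a) = φ j l (hjk.trans hkl) a)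
    (π : ∀ j, A j →⋆ₐ[ℂ] (H j →L[ℂ] H j))
    (hπinj : ∀ j, Function.Injective (π j))
    (hint : ∀ (j k : ℕ) (hjk : j ≤ k) (a : A j) (ξ : H j),
      I j k hjk (π j a ξ) = π k (φ j k hjk a) (I j k hjk ξ))
    (hsmooth : ∀ (j k : ℕ) (hjk : j ≤ k) (a : A j),
      BddCommutator (D j) (π j a) → BddCommutator (D k) (π k (φ j k hjk a)))
    (Alim : Type*) [NormedRing Alim] [StarRing Alim] [CStarRing Alim]
    [NormedAlgebra ℂ Alim] [StarModule ℂ Alim] [CompleteSpace Alim]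
    (φlim : ∀ j, A j →⋆ₐ[ℂ] Alim)
    (hφliminj : ∀ j, Function.Injective (φlim j))
    (hφlim : ∀ (j k : ℕ) (hjk : j ≤ k) (a : A j), φlim k (φ j k hjk a) = φlim j a)
    (hAdense : Dense (⋃ j, Set.range (φlim j)))
    (πlim : Alim →⋆ₐ[ℂ] (Hlim →L[ℂ] Hlim))
    (hπlim : ∀ (j : ℕ) (a : A j) (ξ : H j), πlim (φlim j a) (J j ξ) = J j (π j a ξ))
    (P : ℕ → Hlim →L[ℂ] Hlim)
    (hP : ∀ k, IsSelfAdjoint (P k) ∧ IsIdempotentElem (P k) ∧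
      Set.range (P k) = Set.range (J k))
    (j : ℕ) (a : A j) (ha : BddCommutator (D j) (π j a)) (hasa : IsSelfAdjoint a)
    (k : ℕ) (hjk : j ≤ k) (x : D₀.domain) :
    P k (x : Hlim) ∈ (D₀.domain : Set Hlim) ∧
    πlim (φlim j a) (x : Hlim) ∈ (D₀.domain : Set Hlim) ∧
    ∃ (h1 : πlim (φlim j a) (P k (x : Hlim)) ∈ D₀.closure.domain)
      (h2 : P k (x : Hlim) ∈ D₀.closure.domain)
      (h3 : πlim (φlim j a) (x : Hlim) ∈ D₀.closure.domain)
      (h4 : (x : Hlim) ∈ D₀.closure.domain),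
      D₀.closure ⟨πlim (φlim j a) (P k (x : Hlim)), h1⟩ -
          πlim (φlim j a) (D₀.closure ⟨P k (x : Hlim), h2⟩) =
        P k (D₀.closure ⟨πlim (φlim j a) (x : Hlim), h3⟩ -
          πlim (φlim j a) (D₀.closure ⟨(x : Hlim), h4⟩)) := by
  classical
  -- representation of x at a level n ≥ m, k, j
  have hx0 : (x : Hlim) ∈ (⋃ i, (J i) '' ((D i).domain : Set (H i))) := hdom ▸ x.2
  obtain ⟨m, hx1⟩ := Set.mem_iUnion.mp hx0
  obtain ⟨ξ0, hξ0dom, hξ0⟩ := hx1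
  set n := max m k with hn
  have hmn : m ≤ n := le_max_left _ _
  have hkn : k ≤ n := le_max_right _ _
  have hjn : j ≤ n := hjk.trans hkn
  obtain ⟨hmemξ, hvalξ⟩ := hDcompat m n hmn ⟨ξ0, hξ0dom⟩
  set ξ : (D n).domain := ⟨I m n hmn ξ0, hmemξ⟩ with hξdef
  have hJx : J n (ξ : H n) = (x : Hlim) := by
    show J n (I m n hmn ξ0) = (x : Hlim)
    rw [hJ m n hmn]; exact hξ0
  set V : Submodule ℂ (H n) := LinearMap.range (I k n hkn).toLinearMap with hVdef
  set b : H n →L[ℂ] H n := π n (φ j n hjn a) with hbdef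
  -- b preserves the domain of D n
  obtain ⟨C, hC⟩ := hsmooth j n hjn a ha
  have hbdom : ∀ ζ : (D n).domain, b (ζ : H n) ∈ (D n).domain := fun ζ => (hC ζ).choose
  -- πlim action at level n
  have hπmap : ∀ z : H n, πlim (φlim j a) (J n z) = J n (b z) := by
    intro z
    rw [← hφlim j n hjn a, hπlim n (φ j n hjn a) z]
  -- b is self-adjoint and symmetric
  have hbsa : IsSelfAdjoint b := by
    rw [hbdef]
    have h1 : star (φ j n hjn a) = φ j n hjn a := by rw [← map_star, hasa]
    show star (π n (φ j n hjn a)) = π n (φ j n hjn a)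
    rw [← map_star, h1]
  have hbsym := ContinuousLinearMap.isSelfAdjoint_iff_isSymmetric.mp hbsa
  -- b preserves V and Vᗮ
  have hbV : ∀ v ∈ V, b v ∈ V := by
    rintro v hv
    obtain ⟨ζ, hζ⟩ := LinearMap.mem_range.mp hv
    have hζ' : I k n hkn ζ = v := hζ
    have hb1 : b v = I k n hkn (π k (φ j k hjk a) ζ) := by
      rw [← hζ', hint k n hkn (φ j k hjk a) ζ, hφ j k n hjk hkn a]
    rw [hb1]
    exact LinearMap.mem_range.mpr ⟨π k (φ j k hjk a) ζ, rfl⟩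
  have hbVperp : ∀ w ∈ Vᗮ, b w ∈ Vᗮ := by
    intro w hw
    rw [Submodule.mem_orthogonal]
    intro u hu
    have h1 : ⟪b u, w⟫ = ⟪u, b w⟫ := hbsym u w
    rw [← h1]
    exact (Submodule.mem_orthogonal V w).mp hw _ (hbV u hu)
  -- projection formula
  have hPsym := ContinuousLinearMap.isSelfAdjoint_iff_isSymmetric.mp (hP k).1
  have hPk : ∀ z v w : H n, v ∈ V → w ∈ Vᗮ → z = v + w → P k (J n z) = J n v := by
    intro z v w hv hw hz
    obtain ⟨ζv, hζv⟩ := LinearMap.mem_range.mp hv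
    have hζv' : I k n hkn ζv = v := hζv
    have hJv : J n v = J k ζv := by rw [← hζv']; exact hJ k n hkn ζv
    have hfix : P k (J n v) = J n v := by
      have hr : J n v ∈ Set.range (P k) := by
        rw [(hP k).2.2]; exact ⟨ζv, hJv.symm⟩
      obtain ⟨u, hu⟩ := hr
      rw [← hu, ← ContinuousLinearMap.mul_apply, (hP k).2.1]
    have hperp : ∀ u' : Hlim, u' ∈ Set.range (J k) → ⟪u', J n w⟫ = 0 := by
      rintro _ ⟨ζ', rfl⟩
      rw [← hJ k n hkn ζ', LinearIsometry.inner_map_map]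
      exact (Submodule.mem_orthogonal V w).mp hw _ (LinearMap.mem_range.mpr ⟨ζ', rfl⟩)
    have hzero : P k (J n w) = 0 := by
      have h1 : ⟪P k (J n w), P k (J n w)⟫ = 0 := by
        have h2 : ⟪P k (J n w), P k (J n w)⟫ = ⟪J n w, P k (P k (J n w))⟫ :=
          hPsym _ _
        rw [h2, ← ContinuousLinearMap.mul_apply, (hP k).2.1, ← inner_conj_symm]
        have hr : P k (J n w) ∈ Set.range (J k) := by
          rw [← (hP k).2.2]; exact ⟨J n w, rfl⟩
        rw [hperp _ hr]
        exact (starRingEnd ℂ).map_zero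
      exact inner_self_eq_zero.mp h1
    rw [hz, _root_.map_add, _root_.map_add, hfix, hzero, add_zero]
  -- decomposition of ξ and b ξ
  have hUk := hDcompat k n hkn
  obtain ⟨ξ₁, ξ₂, hξ₁V, hξ₂V, hξsum, hDξ₁, hDξ₂⟩ :=
    pmap_reduce (hDsa n) (hDsa k) (I k n hkn) hUk ξ
  set bξ : (D n).domain := ⟨b (ξ : H n), hbdom ξ⟩ with hbξdef
  set bξ₁ : (D n).domain := ⟨b (ξ₁ : H n), hbdom ξ₁⟩ with hbξ₁def
  set bξ₂ : (D n).domain := ⟨b (ξ₂ : H n), hbdom ξ₂⟩ with hbξ₂def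
  obtain ⟨β₁, β₂, hβ₁V, hβ₂V, hβsum, hDβ₁, hDβ₂⟩ :=
    pmap_reduce (hDsa n) (hDsa k) (I k n hkn) hUk bξ
  have huniq : ∀ v w v' w' : H n, v ∈ V → w ∈ Vᗮ → v' ∈ V → w' ∈ Vᗮ →
      v + w = v' + w' → v = v' := by
    intro v w v' w' hv hw hv' hw' hsum
    have hVW : v - v' ∈ V ⊓ Vᗮ := by
      constructor
      · exact Submodule.sub_mem _ hv hv'
      · have h2 : v - v' = w' - w := by
          rw [sub_eq_sub_iff_add_eq_add, hsum, add_comm]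
        rw [h2]; exact Submodule.sub_mem _ hw' hw
    rw [(Submodule.orthogonal_disjoint V).eq_bot, Submodule.mem_bot] at hVW
    exact sub_eq_zero.mp hVW
  have hξsum' : (ξ : H n) = (ξ₁ : H n) + (ξ₂ : H n) := by
    rw [hξsum]; rfl
  have hbsum : bξ = bξ₁ + bξ₂ := by
    apply Subtype.ext
    show b (ξ : H n) = b (ξ₁ : H n) + b (ξ₂ : H n)
    rw [hξsum']
    exact _root_.map_add b _ _
  have hβ₁eq : β₁ = bξ₁ := by
    apply Subtype.ext
    refine huniq _ _ _ _ hβ₁V hβ₂V (hbV _ hξ₁V) (hbVperp _ hξ₂V) ?_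
    have h1 : (β₁ : H n) + (β₂ : H n) = (bξ : H n) := by rw [hβsum]; rfl
    have h2 : (bξ₁ : H n) + (bξ₂ : H n) = (bξ : H n) := by rw [hbsum]; rfl
    rw [h1, ← h2]
  have hβ₂eq : β₂ = bξ₂ := by
    have h' : bξ₁ + β₂ = bξ₁ + bξ₂ := by
      conv_lhs => rw [← hβ₁eq, ← hβsum]
      rw [hbsum]
    exact add_left_cancel h'
  rw [hβ₁eq] at hDβ₁
  rw [hβ₂eq] at hDβ₂
  -- memberships
  have hmemD : ∀ ζ : (D n).domain, J n (ζ : H n) ∈ D₀.domain := by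
    intro ζ
    have h1 : J n (ζ : H n) ∈ (D₀.domain : Set Hlim) := by
      rw [hdom]
      exact Set.mem_iUnion.mpr ⟨n, ⟨(ζ : H n), ζ.2, rfl⟩⟩
    exact h1
  have hPkx : P k (x : Hlim) = J n (ξ₁ : H n) := by
    rw [← hJx]; exact hPk _ _ _ hξ₁V hξ₂V hξsum'
  have hπx : πlim (φlim j a) (x : Hlim) = J n (bξ : H n) := by
    rw [← hJx, hπmap]
  have e1 : πlim (φlim j a) (P k (x : Hlim)) = J n (bξ₁ : H n) := by
    rw [hPkx, hπmap]
  refine ⟨?_, ?_, ?_, ?_, ?_, ?_, ?_⟩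
  · exact hPkx ▸ hmemD ξ₁
  · exact hπx ▸ hmemD bξ
  · exact e1 ▸ D₀.le_closure.1 (hmemD bξ₁)
  · exact hPkx ▸ D₀.le_closure.1 (hmemD ξ₁)
  · exact hπx ▸ D₀.le_closure.1 (hmemD bξ)
  · exact hJx ▸ D₀.le_closure.1 (hmemD ξ)
  -- the commutator identity
  have key : ∀ (y : Hlim) (hy : y ∈ D₀.closure.domain) (ζ : (D n).domain),
      y = J n (ζ : H n) → D₀.closure ⟨y, hy⟩ = J n ((D n) ζ) := by
    intro y hy ζ hyζ
    subst hyζ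
    have hm1 : J n (ζ : H n) ∈ D₀.domain := hmemD ζ
    have h := D₀.le_closure.2 (x := ⟨J n (ζ : H n), hm1⟩) (y := ⟨J n (ζ : H n), hy⟩) rfl
    rw [← h, hact n ζ hm1]
  rw [key _ _ bξ₁ e1, key _ _ ξ₁ hPkx, key _ _ bξ hπx, key _ _ ξ hJx.symm]
  rw [hπmap, hπmap, ← map_sub (J n), ← map_sub (J n)]
  -- final projection computation
  have hDbsum : (D n) bξ = (D n) bξ₁ + (D n) bξ₂ := by rw [hbsum, LinearPMap.map_add]
  have hDξsum : (D n) ξ = (D n) ξ₁ + (D n) ξ₂ := by rw [hξsum, LinearPMap.map_add]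
  refine (hPk _ _ ((D n) bξ₂ - b ((D n) ξ₂)) ?_ ?_ ?_).symm
  · exact Submodule.sub_mem _ hDβ₁ (hbV _ hDξ₁)
  · exact Submodule.sub_mem _ hDβ₂ (hbVperp _ hDξ₂)
  · rw [hDbsum, hDξsum, _root_.map_add]
    abel
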